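/- arXiv:2402.07099 — 2 statements merged into one kernel-verified Lean document; each statement's English description precedes it below -/
import Mathlib

section
/- Let G and Ḡ be MILP instances of size (m,n). Then G ∼₂ Ḡ if and only if there exists a permutation σ_W of {1,…,n} such that G ∼₂^W σ_W∗Ḡ, where σ_W∗Ḡ denotes the instance obtained from Ḡ by relabeling its variables by σ_W. -/
open scoped BigOperators Classical
open MeasureTheory

noncomputable section

/-- Type of constraint senses: `0` is `≤`, `1` is `=`, `2` is `≥`. -/
abbrev Sense : Type := Fin 3

/-- Extended lower bounds: `Sum.inl a` is a real bound, `Sum.inr ()` is `-∞`. -/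
abbrev ExtLo : Type := ℝ ⊕ Unit

/-- Extended upper bounds: `Sum.inl a` is a real bound, `Sum.inr ()` is `+∞`. -/
abbrev ExtHi : Type := ℝ ⊕ Unit

def senseRel (s : Sense) (a b : ℝ) : Prop :=
  if s = 0 then a ≤ b else if s = 1 then a = b else b ≤ a

def loSat (lo : ExtLo) (x : ℝ) : Prop :=
  match lo with
  | Sum.inl a => a ≤ x
  | Sum.inr _ => True

def hiSat (hi : ExtHi) (x : ℝ) : Prop :=
  match hi with
  | Sum.inl a => x ≤ a
  | Sum.inr _ => True

/-- The space `𝒢_{m,n}` of MILP instances of size `(m,n)`: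
`(A, b, c, ∘, l, u, I)`, with `I` encoded as a Boolean indicator vector. -/
abbrev MILP (m n : ℕ) : Type :=
  (Fin m → Fin n → ℝ) × (Fin m → ℝ) × (Fin n → ℝ) × (Fin m → Sense) ×
  (Fin n → ExtLo) × (Fin n → ExtHi) × (Fin n → Bool)

namespace MILP

variable {m n : ℕ}

def A (G : MILP m n) : Fin m → Fin n → ℝ := G.1
def b (G : MILP m n) : Fin m → ℝ := G.2.1
def c (G : MILP m n) : Fin n → ℝ := G.2.2.1
def sense (G : MILP m n) : Fin m → Sense := G.2.2.2.1
def lo (G : MILP m n) : Fin n → ExtLo := G.2.2.2.2.1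
def hi (G : MILP m n) : Fin n → ExtHi := G.2.2.2.2.2.1
def isInt (G : MILP m n) : Fin n → Bool := G.2.2.2.2.2.2

end MILP

/-- Satisfaction of the linear constraints `(Ax) ∘ b`. -/
def consSat {m n : ℕ} (G : MILP m n) (x : Fin n → ℝ) : Prop :=
  ∀ i, senseRel (MILP.sense G i) (∑ j, MILP.A G i j * x j) (MILP.b G i)

/-- Feasible set of the LP relaxation of `G`. -/
def lpFeasSet {m n : ℕ} (G : MILP m n) : Set (Fin n → ℝ) :=
  {x | consSat G x ∧ ∀ j, loSat (MILP.lo G j) (x j) ∧ hiSat (MILP.hi G j) (x j)}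

/-- Feasible set of `LP(G, j, lo', hi')`: the LP relaxation of `G` with the bound
constraint on variable `j` replaced by `lo' ≤ x_j ≤ hi'`. -/
def feasSetMod {m n : ℕ} (G : MILP m n) (j : Fin n) (lo' : ExtLo) (hi' : ExtHi) :
    Set (Fin n → ℝ) :=
  {x | consSat G x ∧ (∀ j', j' ≠ j → loSat (MILP.lo G j') (x j') ∧ hiSat (MILP.hi G j') (x j'))
      ∧ loSat lo' (x j) ∧ hiSat hi' (x j)}

/-- Optimal value (in `ℝ ∪ {±∞}`) of the LP `min cᵀx` over `S`:
`+∞` if infeasible, `-∞` if unbounded below. -/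
def lpVal {n : ℕ} (c : Fin n → ℝ) (S : Set (Fin n → ℝ)) : EReal :=
  ⨅ x ∈ S, ((∑ j, c j * x j : ℝ) : EReal)

/-- `f*(G)`: optimal value of the LP relaxation of `G`. -/
def fstar {m n : ℕ} (G : MILP m n) : EReal := lpVal (MILP.c G) (lpFeasSet G)

/-- `f*(G, j, lo', hi')`: optimal value of `LP(G, j, lo', hi')`. -/
def lpValMod {m n : ℕ} (G : MILP m n) (j : Fin n) (lo' : ExtLo) (hi' : ExtHi) : EReal :=
  lpVal (MILP.c G) (feasSetMod G j lo' hi')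

/-- The Euclidean norm on `ℝⁿ` (as `Fin n → ℝ`). -/
def euclNorm {n : ℕ} (x : Fin n → ℝ) : ℝ := Real.sqrt (∑ j, x j ^ 2)

/-- The Euclidean distance on `ℝⁿ`. -/
def euclDist {n : ℕ} (x y : Fin n → ℝ) : ℝ := euclNorm (fun j => x j - y j)

/-- `x` is an optimal solution of the LP relaxation of `G`. -/
def IsOptSol {m n : ℕ} (G : MILP m n) (x : Fin n → ℝ) : Prop :=
  x ∈ lpFeasSet G ∧ ((∑ j, MILP.c G j * x j : ℝ) : EReal) = fstar G

/-- `x` is an optimal solution of smallest Euclidean norm of the LP relaxation of `G`. -/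
def IsMinNormOpt {m n : ℕ} (G : MILP m n) (x : Fin n → ℝ) : Prop :=
  IsOptSol G x ∧ ∀ y, IsOptSol G y → euclNorm x ≤ euclNorm y

/-- `x*(G)`: the optimal solution of smallest Euclidean norm of the LP relaxation
(defaults to `0` when it does not exist). -/
def xstar {m n : ℕ} (G : MILP m n) : Fin n → ℝ :=
  if h : ∃ x, IsMinNormOpt G x then h.choose else 0

/-- `f*(G, j, l_j, ⌊x*(G)_j⌋)`. -/
def branchDown {m n : ℕ} (G : MILP m n) (j : Fin n) : EReal :=
  lpValMod G j (MILP.lo G j) (Sum.inl ((⌊xstar G j⌋ : ℤ) : ℝ))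

/-- `f*(G, j, ⌈x*(G)_j⌉, u_j)`. -/
def branchUp {m n : ℕ} (G : MILP m n) (j : Fin n) : EReal :=
  lpValMod G j (Sum.inl ((⌈xstar G j⌉ : ℤ) : ℝ)) (MILP.hi G j)

/-- The strong branching score vector `SB(G) ∈ ℝⁿ`. -/
def SB {m n : ℕ} (G : MILP m n) : Fin n → ℝ := fun j =>
  if MILP.isInt G j then
    ((branchDown G j).toReal - (fstar G).toReal) * ((branchUp G j).toReal - (fstar G).toReal)
  else 0

/-- `SB(G) ∈ ℝⁿ`: the LP relaxation of `G` is feasible and bounded (so that the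
min-norm optimal solution `x*(G)` exists and `f*(G)` is finite), and all the
branch LP values entering the strong branching scores are finite. -/
def SBRealValued {m n : ℕ} (G : MILP m n) : Prop :=
  (∃ x, IsMinNormOpt G x) ∧ fstar G ≠ ⊤ ∧ fstar G ≠ ⊥ ∧
  ∀ j, MILP.isInt G j →
    branchDown G j ≠ ⊤ ∧ branchDown G j ≠ ⊥ ∧ branchUp G j ≠ ⊤ ∧ branchUp G j ≠ ⊥

/-! ### WL colors -/

abbrev VFeat : Type := ℝ × Sense
abbrev WFeat : Type := ℝ × ExtLo × ExtHi × Bool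

/-- The pair (type of constraint-node colors, type of variable-node colors) at
each round of the WL test. -/
def WLTypes : ℕ → Type × Type
  | 0 => (VFeat, WFeat)
  | l + 1 =>
      ((WLTypes l).1 × Multiset ((WLTypes l).2 × ℝ),
       (WLTypes l).2 × Multiset ((WLTypes l).1 × ℝ))

abbrev VColor (l : ℕ) : Type := (WLTypes l).1
abbrev WColor (l : ℕ) : Type := (WLTypes l).2

/-- The canonical WL colors of a MILP instance: `(wl G l).1 i = C_l^V(i)` and
`(wl G l).2 j = C_l^W(j)`. -/
def wl {m n : ℕ} (G : MILP m n) : (l : ℕ) → (Fin m → VColor l) × (Fin n → WColor l)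
  | 0 =>
      (fun i => (MILP.b G i, MILP.sense G i),
       fun j => (MILP.c G j, MILP.lo G j, MILP.hi G j, MILP.isInt G j))
  | l + 1 =>
      (fun i => ((wl G l).1 i,
        (Finset.univ.filter (fun j => MILP.A G i j ≠ 0)).val.map
          (fun j => ((wl G l).2 j, MILP.A G i j))),
       fun j => ((wl G l).2 j,
        (Finset.univ.filter (fun i => MILP.A G i j ≠ 0)).val.map
          (fun i => ((wl G l).1 i, MILP.A G i j))))

/-- `G` is message-passing-tractable: whenever two constraints and two variables are
respectively indistinguishable by all rounds of the WL test, the corresponding matrix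
entries agree (i.e. every submatrix of `A` over a pair of classes of the stable WL
partition is constant). -/
def MPTractable {m n : ℕ} (G : MILP m n) : Prop :=
  ∀ i i' j j', (∀ l, (wl G l).1 i = (wl G l).1 i') → (∀ l, (wl G l).2 j = (wl G l).2 j') →
    MILP.A G i j = MILP.A G i' j'

/-- `G ∼^W G2`. -/
def WLEquivW {m n : ℕ} (G G2 : MILP m n) : Prop :=
  ∀ l, Finset.univ.val.map ((wl G l).1) = Finset.univ.val.map ((wl G2 l).1)
    ∧ ∀ j, (wl G l).2 j = (wl G2 l).2 j

/-! ### MP-GNNs -/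

/-- A message-passing GNN of size `(m,n)`. -/
structure MPGNN (m n : ℕ) where
  L : ℕ
  d : ℕ → ℕ
  e : ℕ → ℕ
  p0 : ℝ × Sense → (Fin (d 0) → ℝ)
  q0 : ℝ × ExtLo × ExtHi × Bool → (Fin (d 0) → ℝ)
  f : (l : ℕ) → (Fin (d l) → ℝ) × ℝ → (Fin (e l) → ℝ)
  g : (l : ℕ) → (Fin (d l) → ℝ) × ℝ → (Fin (e l) → ℝ)
  p : (l : ℕ) → (Fin (d l) → ℝ) × (Fin (e l) → ℝ) → (Fin (d (l + 1)) → ℝ)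
  q : (l : ℕ) → (Fin (d l) → ℝ) × (Fin (e l) → ℝ) → (Fin (d (l + 1)) → ℝ)
  r : (Fin (d L) → ℝ) × (Fin (d L) → ℝ) × (Fin (d L) → ℝ) → ℝ
  p0_cont : Continuous p0
  q0_cont : Continuous q0
  f_cont : ∀ l, Continuous (f l)
  g_cont : ∀ l, Continuous (g l)
  p_cont : ∀ l, Continuous (p l)
  q_cont : ∀ l, Continuous (q l)
  r_cont : Continuous r
  f_zero : ∀ l t, f l (t, 0) = 0
  g_zero : ∀ l s, g l (s, 0) = 0

namespace MPGNN

variable {m n : ℕ}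

/-- The features of an MP-GNN on input `G` after `l` layers:
`(st N G l).1 i = s_i^l` and `(st N G l).2 j = t_j^l`. -/
def st (N : MPGNN m n) (G : MILP m n) :
    (l : ℕ) → (Fin m → (Fin (N.d l) → ℝ)) × (Fin n → (Fin (N.d l) → ℝ))
  | 0 =>
      (fun i => N.p0 (MILP.b G i, MILP.sense G i),
       fun j => N.q0 (MILP.c G j, MILP.lo G j, MILP.hi G j, MILP.isInt G j))
  | l + 1 =>
      (fun i => N.p l ((st N G l).1 i, ∑ j, N.f l ((st N G l).2 j, MILP.A G i j)),
       fun j => N.q l ((st N G l).2 j, ∑ i, N.g l ((st N G l).1 i, MILP.A G i j)))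

/-- The output `F(G) ∈ ℝⁿ` of an MP-GNN. -/
def eval (N : MPGNN m n) (G : MILP m n) : Fin n → ℝ := fun j =>
  N.r (∑ i, (st N G N.L).1 i, ∑ j', (st N G N.L).2 j', (st N G N.L).2 j)

end MPGNN

/-! ### 2-FWL colors -/

/-- The pair (type of `(V,W)`-pair colors, type of `(W,W)`-pair colors) at each
round of the 2-FWL test. -/
def FWLTypes : ℕ → Type × Type
  | 0 => (VFeat × WFeat × ℝ, WFeat × WFeat × Bool)
  | l + 1 =>
      ((FWLTypes l).1 × Multiset ((FWLTypes l).2 × (FWLTypes l).1),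
       (FWLTypes l).2 × Multiset ((FWLTypes l).1 × (FWLTypes l).1))

abbrev VWColor (l : ℕ) : Type := (FWLTypes l).1
abbrev WWColor (l : ℕ) : Type := (FWLTypes l).2

/-- The canonical 2-FWL colors of a MILP instance: `(fwl G l).1 i j = C_l^{VW}(i,j)` and
`(fwl G l).2 j₁ j₂ = C_l^{WW}(j₁,j₂)`. -/
def fwl {m n : ℕ} (G : MILP m n) :
    (l : ℕ) → (Fin m → Fin n → VWColor l) × (Fin n → Fin n → WWColor l)
  | 0 =>
      (fun i j => ((MILP.b G i, MILP.sense G i),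
        (MILP.c G j, MILP.lo G j, MILP.hi G j, MILP.isInt G j), MILP.A G i j),
       fun j1 j2 => ((MILP.c G j1, MILP.lo G j1, MILP.hi G j1, MILP.isInt G j1),
        (MILP.c G j2, MILP.lo G j2, MILP.hi G j2, MILP.isInt G j2), decide (j1 = j2)))
  | l + 1 =>
      (fun i j => ((fwl G l).1 i j,
        Finset.univ.val.map (fun j1 => ((fwl G l).2 j1 j, (fwl G l).1 i j1))),
       fun j1 j2 => ((fwl G l).2 j1 j2,
        Finset.univ.val.map (fun i => ((fwl G l).1 i j2, (fwl G l).1 i j1))))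

/-- `G ∼₂ G2`. -/
def FWLEquiv {m n : ℕ} (G G2 : MILP m n) : Prop :=
  ∀ l, (Finset.univ : Finset (Fin m × Fin n)).val.map (fun p => (fwl G l).1 p.1 p.2)
        = (Finset.univ : Finset (Fin m × Fin n)).val.map (fun p => (fwl G2 l).1 p.1 p.2)
    ∧ (Finset.univ : Finset (Fin n × Fin n)).val.map (fun p => (fwl G l).2 p.1 p.2)
        = (Finset.univ : Finset (Fin n × Fin n)).val.map (fun p => (fwl G2 l).2 p.1 p.2)

/-- `G ∼₂^W G2`. -/
def FWLEquivW {m n : ℕ} (G G2 : MILP m n) : Prop :=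
  ∀ l, ∀ j, Finset.univ.val.map (fun i => (fwl G l).1 i j)
        = Finset.univ.val.map (fun i => (fwl G2 l).1 i j)
    ∧ Finset.univ.val.map (fun j1 => (fwl G l).2 j1 j)
        = Finset.univ.val.map (fun j1 => (fwl G2 l).2 j1 j)

/-! ### 2-FGNNs -/

/-- A second-order folklore GNN of size `(m,n)`. -/
structure FGNN2 (m n : ℕ) where
  L : ℕ
  d : ℕ → ℕ
  e : ℕ → ℕ
  p0 : VFeat × WFeat × ℝ → (Fin (d 0) → ℝ)
  q0 : WFeat × WFeat × Bool → (Fin (d 0) → ℝ)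
  f : (l : ℕ) → (Fin (d l) → ℝ) × (Fin (d l) → ℝ) → (Fin (e l) → ℝ)
  g : (l : ℕ) → (Fin (d l) → ℝ) × (Fin (d l) → ℝ) → (Fin (e l) → ℝ)
  p : (l : ℕ) → (Fin (d l) → ℝ) × (Fin (e l) → ℝ) → (Fin (d (l + 1)) → ℝ)
  q : (l : ℕ) → (Fin (d l) → ℝ) × (Fin (e l) → ℝ) → (Fin (d (l + 1)) → ℝ)
  r : (Fin (d L) → ℝ) × (Fin (d L) → ℝ) → ℝ
  p0_cont : Continuous p0
  q0_cont : Continuous q0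
  f_cont : ∀ l, Continuous (f l)
  g_cont : ∀ l, Continuous (g l)
  p_cont : ∀ l, Continuous (p l)
  q_cont : ∀ l, Continuous (q l)
  r_cont : Continuous r

namespace FGNN2

variable {m n : ℕ}

/-- The features of a 2-FGNN on input `G` after `l` layers:
`(st N G l).1 i j = s_{ij}^l` and `(st N G l).2 j₁ j₂ = t_{j₁j₂}^l`. -/
def st (N : FGNN2 m n) (G : MILP m n) :
    (l : ℕ) → (Fin m → Fin n → (Fin (N.d l) → ℝ)) × (Fin n → Fin n → (Fin (N.d l) → ℝ))
  | 0 =>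
      (fun i j => N.p0 ((MILP.b G i, MILP.sense G i),
        (MILP.c G j, MILP.lo G j, MILP.hi G j, MILP.isInt G j), MILP.A G i j),
       fun j1 j2 => N.q0 ((MILP.c G j1, MILP.lo G j1, MILP.hi G j1, MILP.isInt G j1),
        (MILP.c G j2, MILP.lo G j2, MILP.hi G j2, MILP.isInt G j2), decide (j1 = j2)))
  | l + 1 =>
      (fun i j => N.p l ((st N G l).1 i j, ∑ j1, N.f l ((st N G l).2 j1 j, (st N G l).1 i j1)),
       fun j1 j2 => N.q l ((st N G l).2 j1 j2, ∑ i, N.g l ((st N G l).1 i j2, (st N G l).1 i j1)))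

/-- The output `F(G) ∈ ℝⁿ` of a 2-FGNN. -/
def eval (N : FGNN2 m n) (G : MILP m n) : Fin n → ℝ := fun j =>
  N.r (∑ i, (st N G N.L).1 i j, ∑ j1, (st N G N.L).2 j1 j)

end FGNN2


/-- Relabeling of the variables of a MILP instance by a permutation `σ`:
`A′_{ij} = A_{i σ⁻¹(j)}`, `c′_j = c_{σ⁻¹(j)}`, `l′_j = l_{σ⁻¹(j)}`, `u′_j = u_{σ⁻¹(j)}`,
`I′ = σ(I)`, with `b` and `∘` unchanged. -/
def permW {m n : ℕ} (σ : Equiv.Perm (Fin n)) (G : MILP m n) : MILP m n :=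
  (fun i j => MILP.A G i (σ.symm j), MILP.b G, fun j => MILP.c G (σ.symm j),
   MILP.sense G, fun j => MILP.lo G (σ.symm j), fun j => MILP.hi G (σ.symm j),
   fun j => MILP.isInt G (σ.symm j))

/-! ### Auxiliary lemmas -/

section Aux

/-- Reindexing a map over `univ` by an equivalence. -/
lemma map_univ_equiv' {α β γ : Type*} [Fintype α] [Fintype β] (e : α ≃ β) (f : β → γ) :
    (Finset.univ : Finset α).val.map (fun a => f (e a)) = (Finset.univ : Finset β).val.map f := by
  have h : (Finset.univ : Finset β) = (Finset.univ : Finset α).map e.toEmbedding :=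
    (Finset.map_univ_equiv e).symm
  rw [h, Finset.map_val, Multiset.map_map]
  rfl

/-- A map over the universe of a product type as a bind over the second coordinate. -/
lemma map_univ_pair_bind {α : Type*} {m n : ℕ} (F : Fin m → Fin n → α) :
    (Finset.univ : Finset (Fin m × Fin n)).val.map (fun p => F p.1 p.2)
      = (Finset.univ : Finset (Fin n)).val.bind
          (fun j => Finset.univ.val.map (fun i => F i j)) := by
  have h1 : (Finset.univ : Finset (Fin m × Fin n)).val.map (fun p => F p.1 p.2)
      = (Finset.univ : Finset (Fin n × Fin m)).val.map (fun p => F p.2 p.1) :=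
    (map_univ_equiv' (Equiv.prodComm (Fin n) (Fin m)) (fun p => F p.1 p.2)).symm
  rw [h1, ← Finset.univ_product_univ, Finset.product_val]
  show Multiset.map _ (Multiset.product _ _) = _
  rw [Multiset.product, Multiset.map_bind]
  refine Multiset.bind_congr (fun j _ => ?_)
  rw [Multiset.map_map]
  rfl

/-- Equal multisets of values over `univ` come from a permutation of indices. -/
lemma exists_perm_of_map_univ_eq' {α : Type*} {n : ℕ} (f g : Fin n → α)
    (h : Finset.univ.val.map f = Finset.univ.val.map g) :
    ∃ σ : Equiv.Perm (Fin n), ∀ x, f x = g (σ x) := by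
  classical
  have hcard : ∀ a : α, Fintype.card {x // f x = a} = Fintype.card {x // g x = a} := by
    intro a
    have hc : Multiset.count a (Finset.univ.val.map f)
        = Multiset.count a (Finset.univ.val.map g) := by rw [h]
    rw [Multiset.count_map, Multiset.count_map] at hc
    rw [Fintype.card_subtype, Fintype.card_subtype, Finset.card_def, Finset.card_def,
      Finset.filter_val, Finset.filter_val]
    simpa [eq_comm] using hc
  let e : ∀ a : α, {x // f x = a} ≃ {x // g x = a} := fun a => Fintype.equivOfCardEq (hcard a)
  let σ : Equiv.Perm (Fin n) :=
    (Equiv.sigmaFiberEquiv f).symm.trans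
      ((Equiv.sigmaCongrRight e).trans (Equiv.sigmaFiberEquiv g))
  refine ⟨σ, fun x => ?_⟩
  have hx : σ x = (e (f x) ⟨x, rfl⟩).1 := rfl
  rw [hx]
  exact ((e (f x)) ⟨x, rfl⟩).2.symm

/-- A decreasing chain of finsets stabilizes. -/
lemma chain_stabilizes {α : Type*} (S : ℕ → Finset α) (hS : ∀ l, S (l + 1) ⊆ S l) :
    ∃ L, ∀ l, L ≤ l → S l = S L := by
  have hchain : ∀ k l, S (l + k) ⊆ S l := by
    intro k
    induction k with
    | zero => intro l; exact fun _ h => h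
    | succ k ih => intro l; exact (hS (l + k)).trans (ih l)
  have hne : (Set.range fun l => (S l).card).Nonempty := ⟨(S 0).card, 0, rfl⟩
  obtain ⟨L, hL⟩ := Nat.sInf_mem hne
  refine ⟨L, fun l hl => ?_⟩
  obtain ⟨k, rfl⟩ := Nat.exists_eq_add_of_le hl
  refine Finset.eq_of_subset_of_card_le (hchain k L) ?_
  exact le_of_eq_of_le hL (Nat.sInf_le ⟨L + k, rfl⟩)

variable {m n : ℕ}

/-- The colors of a relabeled instance. -/
lemma fwl_permW (σ : Equiv.Perm (Fin n)) (H : MILP m n) : ∀ l,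
    (∀ i j, (fwl (permW σ H) l).1 i j = (fwl H l).1 i (σ.symm j)) ∧
    (∀ j1 j2, (fwl (permW σ H) l).2 j1 j2 = (fwl H l).2 (σ.symm j1) (σ.symm j2)) := by
  intro l
  induction l with
  | zero =>
      constructor
      · intro i j; rfl
      · intro j1 j2
        show (_, _, decide (j1 = j2)) = (_, _, decide (σ.symm j1 = σ.symm j2))
        have : decide (j1 = j2) = decide (σ.symm j1 = σ.symm j2) := by
          simp [EmbeddingLike.apply_eq_iff_eq]
        rw [this]
        rfl
  | succ l ih =>
      constructor
      · intro i j
        show ((fwl (permW σ H) l).1 i j,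
            Finset.univ.val.map (fun j1 => ((fwl (permW σ H) l).2 j1 j,
              (fwl (permW σ H) l).1 i j1)))
          = ((fwl H l).1 i (σ.symm j),
            Finset.univ.val.map (fun j1 => ((fwl H l).2 j1 (σ.symm j), (fwl H l).1 i j1)))
        rw [ih.1 i j]
        congr 1
        have hmap : Finset.univ.val.map (fun j1 => ((fwl (permW σ H) l).2 j1 j,
              (fwl (permW σ H) l).1 i j1))
            = Finset.univ.val.map (fun j1 => ((fwl H l).2 (σ.symm j1) (σ.symm j),
              (fwl H l).1 i (σ.symm j1))) := by
          refine Multiset.map_congr rfl (fun j1 _ => ?_)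
          rw [ih.2 j1 j, ih.1 i j1]
        rw [hmap]
        exact map_univ_equiv' σ.symm
          (fun j1 => ((fwl H l).2 j1 (σ.symm j), (fwl H l).1 i j1))
      · intro j1 j2
        show ((fwl (permW σ H) l).2 j1 j2,
            Finset.univ.val.map (fun i => ((fwl (permW σ H) l).1 i j2,
              (fwl (permW σ H) l).1 i j1)))
          = ((fwl H l).2 (σ.symm j1) (σ.symm j2),
            Finset.univ.val.map (fun i => ((fwl H l).1 i (σ.symm j2),
              (fwl H l).1 i (σ.symm j1))))
        rw [ih.2 j1 j2]
        congr 1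
        refine Multiset.map_congr rfl (fun i _ => ?_)
        rw [ih.1 i j1, ih.1 i j2]

/-- Extract the `δ` (diagonal indicator) component of a WW color. -/
def projDelta : (l : ℕ) → WWColor l → Bool
  | 0, c => c.2.2
  | l + 1, c => projDelta l c.1

lemma projDelta_fwl (G : MILP m n) : ∀ l j1 j2,
    projDelta l ((fwl G l).2 j1 j2) = decide (j1 = j2) := by
  intro l
  induction l with
  | zero => intro j1 j2; rfl
  | succ l ih => intro j1 j2; exact ih j1 j2

lemma filter_diag {α : Type*} (C : Fin n × Fin n → α) (p : α → Prop) [DecidablePred p]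
    (hp : ∀ q : Fin n × Fin n, p (C q) ↔ q.1 = q.2) :
    Multiset.filter p ((Finset.univ : Finset (Fin n × Fin n)).val.map C)
      = Finset.univ.val.map (fun j => C (j, j)) := by
  classical
  rw [Multiset.filter_map]
  have h1 : Multiset.filter (p ∘ C) (Finset.univ : Finset (Fin n × Fin n)).val
      = ((Finset.univ : Finset (Fin n × Fin n)).filter (fun q => q.1 = q.2)).val := by
    rw [Finset.filter_val]
    exact Multiset.filter_congr (fun q _ => by simpa using hp q)
  rw [h1]
  have h2 : ((Finset.univ : Finset (Fin n × Fin n)).filter (fun q => q.1 = q.2))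
      = Finset.univ.map ⟨fun j : Fin n => (j, j), fun a b hab => by
          simpa using congrArg Prod.fst hab⟩ := by
    ext ⟨a, b⟩
    simp only [Finset.mem_filter, Finset.mem_univ, true_and, Finset.mem_map,
      Function.Embedding.coeFn_mk, Prod.mk.injEq]
    constructor
    · rintro rfl; exact ⟨a, rfl⟩
    · rintro ⟨j, rfl, rfl⟩; rfl
  rw [h2, Finset.map_val, Multiset.map_map]
  rfl

/-- Equality of diagonal WW color multisets from `FWLEquiv`. -/
lemma diag_multiset_eq {G H : MILP m n} (hE : FWLEquiv G H) (l : ℕ) :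
    Finset.univ.val.map (fun j => (fwl G l).2 j j)
      = Finset.univ.val.map (fun j => (fwl H l).2 j j) := by
  classical
  have h := (hE l).2
  have hfil := congrArg (Multiset.filter (fun c : WWColor l => projDelta l c = true)) h
  rwa [filter_diag _ _ (fun q => by simp [projDelta_fwl]),
    filter_diag _ _ (fun q => by simp [projDelta_fwl])] at hfil

/-- Descending diagonal color equality to lower rounds. -/
lemma diag_descend (G H : MILP m n) : ∀ k l (j j' : Fin n),
    (fwl G (l + k)).2 j j = (fwl H (l + k)).2 j' j' →
    (fwl G l).2 j j = (fwl H l).2 j' j' := by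
  intro k
  induction k with
  | zero => intro l j j' h; exact h
  | succ k ih =>
      intro l j j' h
      refine ih l j j' ?_
      exact congrArg Prod.fst h

/-- From `FWLEquiv`, a matching of variables whose diagonal colors agree at all rounds. -/
lemma exists_perm_diag {G H : MILP m n} (hE : FWLEquiv G H) :
    ∃ σ : Equiv.Perm (Fin n), ∀ l j, (fwl G l).2 j j = (fwl H l).2 (σ j) (σ j) := by
  classical
  set S : ℕ → Finset (Fin n × Fin n) :=
    fun l => Finset.univ.filter (fun p => (fwl G l).2 p.1 p.1 = (fwl H l).2 p.2 p.2) with hSdef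
  have hchain : ∀ l, S (l + 1) ⊆ S l := by
    intro l p hp
    simp only [hSdef, Finset.mem_filter, Finset.mem_univ, true_and] at hp ⊢
    exact congrArg Prod.fst hp
  obtain ⟨L, hL⟩ := chain_stabilizes S hchain
  obtain ⟨σ, hσ⟩ := exists_perm_of_map_univ_eq' (fun j => (fwl G L).2 j j)
    (fun j => (fwl H L).2 j j) (diag_multiset_eq hE L)
  refine ⟨σ, fun l j => ?_⟩
  rcases le_or_gt l L with hl | hl
  · obtain ⟨k, rfl⟩ := Nat.exists_eq_add_of_le hl
    exact diag_descend G H k l j (σ j) (hσ j)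
  · have hmem : (j, σ j) ∈ S L := by
      simp only [hSdef, Finset.mem_filter, Finset.mem_univ, true_and]
      exact hσ j
    have : (j, σ j) ∈ S l := by rw [hL l hl.le]; exact hmem
    simpa only [hSdef, Finset.mem_filter, Finset.mem_univ, true_and] using this

/-- Column multiset equality for VW colors from diagonal equality. -/
lemma colV_of_diag {G H : MILP m n} (τ : Fin n → Fin n)
    (hdiag : ∀ l j, (fwl G l).2 j j = (fwl H l).2 (τ j) (τ j)) (l : ℕ) (j : Fin n) :
    Finset.univ.val.map (fun i => (fwl G l).1 i j)
      = Finset.univ.val.map (fun i => (fwl H l).1 i (τ j)) := by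
  have h := congrArg Prod.snd (hdiag (l + 1) j)
  have h' := congrArg (Multiset.map (Prod.fst : VWColor l × VWColor l → VWColor l)) h
  simpa only [fwl, Multiset.map_map, Function.comp] using h'

/-- Column multiset equality for WW colors from diagonal equality. -/
lemma colW_of_diag {G H : MILP m n} (σ : Equiv.Perm (Fin n))
    (hdiag : ∀ l j, (fwl G l).2 j j = (fwl H l).2 (σ j) (σ j)) (l : ℕ) (j : Fin n) :
    Finset.univ.val.map (fun j1 => (fwl G l).2 j1 j)
      = Finset.univ.val.map (fun j1 => (fwl H l).2 j1 (σ j)) := by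
  rcases Nat.eq_zero_or_pos m with hm | hm
  · -- no constraints: colors are pointwise determined by round 0
    subst hm
    have hpt : ∀ l (j1 j2 : Fin n), (fwl G l).2 j1 j2 = (fwl H l).2 (σ j1) (σ j2) := by
      intro l
      induction l with
      | zero =>
          intro j1 j2
          have hw : ∀ j0 : Fin n,
              (MILP.c G j0, MILP.lo G j0, MILP.hi G j0, MILP.isInt G j0)
                = (MILP.c H (σ j0), MILP.lo H (σ j0), MILP.hi H (σ j0),
                    MILP.isInt H (σ j0)) := by
            intro j0
            have := hdiag 0 j0
            exact congrArg Prod.fst this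
          show (_, _, decide (j1 = j2)) = (_, _, decide (σ j1 = σ j2))
          rw [hw j1, hw j2]
          have : decide (j1 = j2) = decide (σ j1 = σ j2) := by
            simp [EmbeddingLike.apply_eq_iff_eq]
          rw [this]
      | succ l ih =>
          intro j1 j2
          show ((fwl G l).2 j1 j2, (Finset.univ : Finset (Fin 0)).val.map _)
            = ((fwl H l).2 (σ j1) (σ j2), (Finset.univ : Finset (Fin 0)).val.map _)
          rw [ih j1 j2]
          simp
    have hmap : Finset.univ.val.map (fun j1 => (fwl G l).2 j1 j)
        = Finset.univ.val.map (fun j1 => (fwl H l).2 (σ j1) (σ j)) :=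
      Multiset.map_congr rfl (fun j1 _ => hpt l j1 j)
    rw [hmap]
    exact map_univ_equiv' σ (fun j1 => (fwl H l).2 j1 (σ j))
  · -- at least one constraint: use a matched pair of VW colors at round l+1
    have hcol := colV_of_diag (⇑σ) hdiag (l + 1) j
    have hmem : (fwl G (l + 1)).1 ⟨0, hm⟩ j
        ∈ Finset.univ.val.map (fun i => (fwl H (l + 1)).1 i (σ j)) := by
      rw [← hcol]
      exact Multiset.mem_map_of_mem _ (Finset.mem_univ_val _)
    obtain ⟨i', _, hi'⟩ := Multiset.mem_map.mp hmem
    have h2 := congrArg Prod.snd hi'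
    have h3 := congrArg (Multiset.map (Prod.fst : WWColor l × VWColor l → WWColor l)) h2
    simpa only [fwl, Multiset.map_map, Function.comp] using h3.symm

/-- `FWLEquivW` implies `FWLEquiv`. -/
lemma fwlEquiv_of_fwlEquivW {G G2 : MILP m n} (h : FWLEquivW G G2) : FWLEquiv G G2 := by
  intro l
  constructor
  · rw [map_univ_pair_bind (fun i j => (fwl G l).1 i j),
      map_univ_pair_bind (fun i j => (fwl G2 l).1 i j)]
    exact Multiset.bind_congr (fun j _ => (h l j).1)
  · rw [map_univ_pair_bind (fun j1 j => (fwl G l).2 j1 j),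
      map_univ_pair_bind (fun j1 j => (fwl G2 l).2 j1 j)]
    exact Multiset.bind_congr (fun j _ => (h l j).2)

/-- Relabeling preserves the global color multisets. -/
lemma fwlEquiv_permW (σ : Equiv.Perm (Fin n)) (H : MILP m n) : FWLEquiv (permW σ H) H := by
  intro l
  constructor
  · have hmap : (Finset.univ : Finset (Fin m × Fin n)).val.map
        (fun p => (fwl (permW σ H) l).1 p.1 p.2)
        = (Finset.univ : Finset (Fin m × Fin n)).val.map
            (fun p => (fwl H l).1 p.1 (σ.symm p.2)) :=
      Multiset.map_congr rfl (fun p _ => (fwl_permW σ H l).1 p.1 p.2)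
    rw [hmap]
    exact map_univ_equiv' (Equiv.prodCongr (Equiv.refl (Fin m)) σ.symm)
      (fun p => (fwl H l).1 p.1 p.2)
  · have hmap : (Finset.univ : Finset (Fin n × Fin n)).val.map
        (fun p => (fwl (permW σ H) l).2 p.1 p.2)
        = (Finset.univ : Finset (Fin n × Fin n)).val.map
            (fun p => (fwl H l).2 (σ.symm p.1) (σ.symm p.2)) :=
      Multiset.map_congr rfl (fun p _ => (fwl_permW σ H l).2 p.1 p.2)
    rw [hmap]
    exact map_univ_equiv' (Equiv.prodCongr σ.symm σ.symm) (fun p => (fwl H l).2 p.1 p.2)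

end Aux

/-- `G ∼₂ Ḡ` iff `G ∼₂^W σ_W ∗ Ḡ` for some permutation `σ_W` of the
variables. -/
theorem fwlEquiv_iff_exists_perm_fwlEquivW
    {m n : ℕ} (G H : MILP m n) :
    FWLEquiv G H ↔ ∃ σ : Equiv.Perm (Fin n), FWLEquivW G (permW σ H) := by
  constructor
  · intro hE
    obtain ⟨σ, hdiag'⟩ := exists_perm_diag hE
    have hdiag : ∀ l j, (fwl G l).2 j j = (fwl H l).2 (σ j) (σ j) := fun l j => hdiag' l j
    refine ⟨σ.symm, fun l j => ?_⟩
    constructor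
    · have h1 : Finset.univ.val.map (fun i => (fwl (permW σ.symm H) l).1 i j)
          = Finset.univ.val.map (fun i => (fwl H l).1 i (σ j)) :=
        Multiset.map_congr rfl (fun i _ => by
          rw [(fwl_permW σ.symm H l).1 i j, Equiv.symm_symm])
      rw [h1]
      exact colV_of_diag (⇑σ) hdiag l j
    · have h1 : Finset.univ.val.map (fun j1 => (fwl (permW σ.symm H) l).2 j1 j)
          = Finset.univ.val.map (fun j1 => (fwl H l).2 (σ j1) (σ j)) :=
        Multiset.map_congr rfl (fun j1 _ => by
          rw [(fwl_permW σ.symm H l).2 j1 j, Equiv.symm_symm])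
      rw [h1]
      have h2 : Finset.univ.val.map (fun j1 => (fwl H l).2 (σ j1) (σ j))
          = Finset.univ.val.map (fun j1 => (fwl H l).2 j1 (σ j)) :=
        map_univ_equiv' σ (fun j1 => (fwl H l).2 j1 (σ j))
      rw [h2]
      exact colW_of_diag σ hdiag l j
  · rintro ⟨σ, hW⟩
    have h1 : FWLEquiv G (permW σ H) := fwlEquiv_of_fwlEquivW hW
    have h2 : FWLEquiv (permW σ H) H := fwlEquiv_permW σ H
    intro l
    exact ⟨(h1 l).1.trans (h2 l).1, (h1 l).2.trans (h2 l).2⟩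
end
end

section
/- Let G and Ḡ be MILP instances of size (m,n) with G ∼₂^W Ḡ. Then for every j ∈ {1,…,n}, every l̂ ∈ {−∞}∪ℝ, and every û ∈ ℝ∪{+∞}, the linear programs LP(G,j,l̂,û) and LP(Ḡ,j,l̂,û) have the same optimal value, where the optimal value of a minimization LP is the infimum of its objective over its feasible set, taken in ℝ∪{±∞} (equal to +∞ if infeasible and −∞ if unbounded below). -/
open scoped BigOperators Classical
open MeasureTheory

noncomputable section

/-! ### Auxiliary lemmas for the proof of Statement 14 -/

section FWLProofAux

private lemma map_eq_of_comp_perm {ι α : Type*} [Fintype ι] {f g : ι → α} (e : Equiv.Perm ι)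
    (hfg : ∀ x, f x = g (e x)) :
    Finset.univ.val.map f = Finset.univ.val.map g := by
  have h1 : Finset.univ.val.map f = Finset.univ.val.map (g ∘ e) :=
    Multiset.map_congr rfl (fun x _ => hfg x)
  rw [h1, ← Multiset.map_map]
  congr 1
  calc Multiset.map (⇑e) Finset.univ.val = (Finset.univ.map e.toEmbedding).val := rfl
    _ = Finset.univ.val := by rw [Finset.map_univ_equiv]

private lemma exists_perm_of_map_eq {ι α : Type*} [Fintype ι] {f g : ι → α}
    (h : Finset.univ.val.map f = Finset.univ.val.map g) :
    ∃ e : Equiv.Perm ι, ∀ x, f x = g (e x) := by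
  classical
  have hcard : ∀ a : α, Fintype.card {x // f x = a} = Fintype.card {x // g x = a} := by
    intro a
    have hc := congrArg (Multiset.count a) h
    rw [Multiset.count_map, Multiset.count_map] at hc
    rw [Fintype.card_subtype, Fintype.card_subtype]
    have key : ∀ (u : ι → α), (Finset.univ.filter (fun x => u x = a)).card
        = Multiset.card (Finset.univ.val.filter (fun x => a = u x)) := by
      intro u
      rw [Finset.card, Finset.filter_val]
      congr 1
      exact Multiset.filter_congr (fun x _ => ⟨Eq.symm, Eq.symm⟩)
    rw [key f, key g, hc]
  exact ⟨Equiv.ofFiberEquiv (fun a => Fintype.equivOfCardEq (hcard a)),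
    fun x => (Equiv.ofFiberEquiv_map (fun a => Fintype.equivOfCardEq (hcard a)) x).symm⟩

private lemma sum_comp_of_map_eq {ι κ α : Type*} [Fintype ι] [Fintype κ] {f : ι → α} {g : κ → α}
    (h : Finset.univ.val.map f = Finset.univ.val.map g) (φ : α → ℝ) :
    ∑ i, φ (f i) = ∑ k, φ (g k) := by
  have hc := congrArg (fun M => (Multiset.map φ M).sum) h
  simp only [Multiset.map_map] at hc
  rw [Finset.sum_eq_multiset_sum, Finset.sum_eq_multiset_sum]
  exact hc

private lemma senseRel_avg {ι : Type*} (s : Sense) (b c : ℝ) (P : Finset ι) (hP : P.Nonempty)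
    (v : ι → ℝ) (hv : ∀ i ∈ P, senseRel s (v i) b)
    (hc : (P.card : ℝ) * c = ∑ i ∈ P, v i) : senseRel s c b := by
  have hpos : (0:ℝ) < (P.card : ℝ) := by exact_mod_cast Finset.card_pos.2 hP
  have hbsum : ∑ _i ∈ P, b = (P.card : ℝ) * b := by rw [Finset.sum_const, nsmul_eq_mul]
  by_cases h1 : s = 0
  · simp only [senseRel, if_pos h1]
    have hv' : ∀ i ∈ P, v i ≤ b := by
      intro i hi; have := hv i hi; simpa only [senseRel, if_pos h1] using this
    have hs : (P.card : ℝ) * c ≤ (P.card : ℝ) * b := by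
      rw [hc, ← hbsum]; exact Finset.sum_le_sum hv'
    exact le_of_mul_le_mul_left hs hpos
  · by_cases h2 : s = 1
    · simp only [senseRel, if_neg h1, if_pos h2]
      have hv' : ∀ i ∈ P, v i = b := by
        intro i hi; have := hv i hi; simpa only [senseRel, if_neg h1, if_pos h2] using this
      have hs : (P.card : ℝ) * c = (P.card : ℝ) * b := by
        rw [hc, ← hbsum]; exact Finset.sum_congr rfl hv'
      exact mul_left_cancel₀ (ne_of_gt hpos) hs
    · simp only [senseRel, if_neg h1, if_neg h2]
      have hv' : ∀ i ∈ P, b ≤ v i := by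
        intro i hi; have := hv i hi; simpa only [senseRel, if_neg h1, if_neg h2] using this
      have hs : (P.card : ℝ) * b ≤ (P.card : ℝ) * c := by
        rw [hc, ← hbsum]; exact Finset.sum_le_sum hv'
      exact le_of_mul_le_mul_left hs hpos

end FWLProofAux

section FWLStabilize

private def pVW : ∀ l, VWColor l → VWColor 0
  | 0, c => c
  | l+1, c => pVW l c.1

private def pWW : ∀ l, WWColor l → WWColor 0
  | 0, c => c
  | l+1, c => pWW l c.1

private lemma pVW_fwl {m n : ℕ} (G : MILP m n) :
    ∀ (l : ℕ) (i : Fin m) (jj : Fin n), pVW l ((fwl G l).1 i jj) = (fwl G 0).1 i jj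
  | 0, _, _ => rfl
  | l+1, i, jj => pVW_fwl G l i jj

private lemma pWW_fwl {m n : ℕ} (G : MILP m n) :
    ∀ (l : ℕ) (j1 jj : Fin n), pWW l ((fwl G l).2 j1 jj) = (fwl G 0).2 j1 jj
  | 0, _, _ => rfl
  | l+1, j1, jj => pWW_fwl G l j1 jj

private def KObj (m n : ℕ) : Type := ((Fin m × Fin n) ⊕ (Fin n × Fin n)) × Bool

private instance KObj.fintype {m n : ℕ} : Fintype (KObj m n) :=
  inferInstanceAs (Fintype (((Fin m × Fin n) ⊕ (Fin n × Fin n)) × Bool))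

private def sel {m n : ℕ} (G H : MILP m n) : Bool → MILP m n := fun b => cond b G H

private def Kc {m n : ℕ} (G H : MILP m n) (l : ℕ) (x : KObj m n) : VWColor l ⊕ WWColor l :=
  x.1.elim (fun p => Sum.inl ((fwl (sel G H x.2) l).1 p.1 p.2))
    (fun p => Sum.inr ((fwl (sel G H x.2) l).2 p.1 p.2))

private def projC (l : ℕ) : (VWColor (l+1) ⊕ WWColor (l+1)) → (VWColor l ⊕ WWColor l) :=
  Sum.map Prod.fst Prod.fst

private lemma projC_Kc {m n : ℕ} (G H : MILP m n) (l : ℕ) (x : KObj m n) :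
    projC l (Kc G H (l+1) x) = Kc G H l x := by
  rcases x with ⟨p | p, b⟩ <;> rfl

private lemma exists_stable {m n : ℕ} (G H : MILP m n) :
    ∃ L : ℕ, ∀ x y : KObj m n, Kc G H L x = Kc G H L y → ∀ l, Kc G H l x = Kc G H l y := by
  classical
  set Nf : ℕ → ℕ := fun l => (Finset.univ.image (Kc G H l)).card with hNf
  have himage : ∀ l, Finset.univ.image (Kc G H l)
      = (Finset.univ.image (Kc G H (l+1))).image (projC l) := by
    intro l
    rw [Finset.image_image]
    exact Finset.image_congr (fun x _ => (projC_Kc G H l x).symm)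
  have hmono : ∀ l, Nf l ≤ Nf (l+1) := by
    intro l
    rw [hNf]
    simp only
    rw [himage l]
    exact Finset.card_image_le
  have hbound : ∀ l, Nf l ≤ Fintype.card (KObj m n) := by
    intro l
    exact le_trans Finset.card_image_le (le_of_eq Finset.card_univ)
  have hex : ∃ L, Nf L = Nf (L+1) := by
    by_contra hcon
    push_neg at hcon
    have hgrow : ∀ l, l ≤ Nf l := by
      intro l
      induction l with
      | zero => exact Nat.zero_le _
      | succ k ih => exact Nat.succ_le_of_lt (lt_of_le_of_lt ih (lt_of_le_of_ne (hmono k) (hcon k)))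
    have h1 := hgrow (Fintype.card (KObj m n) + 1)
    have h2 := hbound (Fintype.card (KObj m n) + 1)
    omega
  obtain ⟨L, hLL⟩ := hex
  have hinj : Set.InjOn (projC L)
      ((Finset.univ.image (Kc G H (L+1))) : Finset (VWColor (L+1) ⊕ WWColor (L+1))) := by
    apply Finset.injOn_of_card_image_eq
    rw [← himage L]
    exact hLL
  have hE1 : ∀ x y : KObj m n, Kc G H L x = Kc G H L y → Kc G H (L+1) x = Kc G H (L+1) y := by
    intro x y hxy
    apply hinj (Finset.mem_coe.2 (Finset.mem_image_of_mem _ (Finset.mem_univ x)))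
      (Finset.mem_coe.2 (Finset.mem_image_of_mem _ (Finset.mem_univ y)))
    rw [projC_Kc, projC_Kc]
    exact hxy
  have hup : ∀ l, (∀ x y : KObj m n, Kc G H l x = Kc G H l y → Kc G H (l+1) x = Kc G H (l+1) y) →
      ∀ x y : KObj m n, Kc G H (l+1) x = Kc G H (l+1) y → Kc G H (l+2) x = Kc G H (l+2) y := by
    intro l hl x y hxy
    rcases x with ⟨px | px, bx⟩ <;> rcases y with ⟨py | py, byy⟩
    · -- VW / VW
      obtain ⟨i, jx⟩ := px
      obtain ⟨i', jy⟩ := py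
      have hxy' : (fwl (sel G H bx) (l+1)).1 i jx = (fwl (sel G H byy) (l+1)).1 i' jy :=
        Sum.inl_injective hxy
      have h2 : Finset.univ.val.map
            (fun j1 => ((fwl (sel G H bx) l).2 j1 jx, (fwl (sel G H bx) l).1 i j1))
          = Finset.univ.val.map
            (fun j1 => ((fwl (sel G H byy) l).2 j1 jy, (fwl (sel G H byy) l).1 i' j1)) :=
        congrArg Prod.snd hxy'
      obtain ⟨e, he⟩ := exists_perm_of_map_eq h2
      have hWW : ∀ j1, (fwl (sel G H bx) (l+1)).2 j1 jx = (fwl (sel G H byy) (l+1)).2 (e j1) jy := by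
        intro j1
        have hk : Kc G H l (Sum.inr (j1, jx), bx) = Kc G H l (Sum.inr (e j1, jy), byy) :=
          congrArg Sum.inr (congrArg Prod.fst (he j1))
        exact Sum.inr_injective (hl _ _ hk)
      have hVW : ∀ j1, (fwl (sel G H bx) (l+1)).1 i j1 = (fwl (sel G H byy) (l+1)).1 i' (e j1) := by
        intro j1
        have hk : Kc G H l (Sum.inl (i, j1), bx) = Kc G H l (Sum.inl (i', e j1), byy) :=
          congrArg Sum.inl (congrArg Prod.snd (he j1))
        exact Sum.inl_injective (hl _ _ hk)
      have hm : Finset.univ.val.map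
            (fun j1 => ((fwl (sel G H bx) (l+1)).2 j1 jx, (fwl (sel G H bx) (l+1)).1 i j1))
          = Finset.univ.val.map
            (fun j1 => ((fwl (sel G H byy) (l+1)).2 j1 jy, (fwl (sel G H byy) (l+1)).1 i' j1)) :=
        map_eq_of_comp_perm e (fun j1 => by rw [hWW j1, hVW j1])
      have hpair : ((fwl (sel G H bx) (l+1)).1 i jx,
            Finset.univ.val.map
              (fun j1 => ((fwl (sel G H bx) (l+1)).2 j1 jx, (fwl (sel G H bx) (l+1)).1 i j1)))
          = ((fwl (sel G H byy) (l+1)).1 i' jy,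
            Finset.univ.val.map
              (fun j1 => ((fwl (sel G H byy) (l+1)).2 j1 jy, (fwl (sel G H byy) (l+1)).1 i' j1))) := by
        rw [hxy', hm]
      exact congrArg Sum.inl hpair
    · exfalso; simp only [Kc, Sum.elim_inl, Sum.elim_inr] at hxy
      exact absurd hxy (by simp)
    · exfalso; simp only [Kc, Sum.elim_inl, Sum.elim_inr] at hxy
      exact absurd hxy (by simp)
    · -- WW / WW
      obtain ⟨j1x, j2x⟩ := px
      obtain ⟨j1y, j2y⟩ := py
      have hxy' : (fwl (sel G H bx) (l+1)).2 j1x j2x = (fwl (sel G H byy) (l+1)).2 j1y j2y :=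
        Sum.inr_injective hxy
      have h2 : Finset.univ.val.map
            (fun i => ((fwl (sel G H bx) l).1 i j2x, (fwl (sel G H bx) l).1 i j1x))
          = Finset.univ.val.map
            (fun i => ((fwl (sel G H byy) l).1 i j2y, (fwl (sel G H byy) l).1 i j1y)) :=
        congrArg Prod.snd hxy'
      obtain ⟨e, he⟩ := exists_perm_of_map_eq h2
      have hVW2 : ∀ i, (fwl (sel G H bx) (l+1)).1 i j2x = (fwl (sel G H byy) (l+1)).1 (e i) j2y := by
        intro i
        have hk : Kc G H l (Sum.inl (i, j2x), bx) = Kc G H l (Sum.inl (e i, j2y), byy) :=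
          congrArg Sum.inl (congrArg Prod.fst (he i))
        exact Sum.inl_injective (hl _ _ hk)
      have hVW1 : ∀ i, (fwl (sel G H bx) (l+1)).1 i j1x = (fwl (sel G H byy) (l+1)).1 (e i) j1y := by
        intro i
        have hk : Kc G H l (Sum.inl (i, j1x), bx) = Kc G H l (Sum.inl (e i, j1y), byy) :=
          congrArg Sum.inl (congrArg Prod.snd (he i))
        exact Sum.inl_injective (hl _ _ hk)
      have hm : Finset.univ.val.map
            (fun i => ((fwl (sel G H bx) (l+1)).1 i j2x, (fwl (sel G H bx) (l+1)).1 i j1x))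
          = Finset.univ.val.map
            (fun i => ((fwl (sel G H byy) (l+1)).1 i j2y, (fwl (sel G H byy) (l+1)).1 i j1y)) :=
        map_eq_of_comp_perm e (fun i => by rw [hVW2 i, hVW1 i])
      have hpair : ((fwl (sel G H bx) (l+1)).2 j1x j2x,
            Finset.univ.val.map
              (fun i => ((fwl (sel G H bx) (l+1)).1 i j2x, (fwl (sel G H bx) (l+1)).1 i j1x)))
          = ((fwl (sel G H byy) (l+1)).2 j1y j2y,
            Finset.univ.val.map
              (fun i => ((fwl (sel G H byy) (l+1)).1 i j2y, (fwl (sel G H byy) (l+1)).1 i j1y))) := by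
        rw [hxy', hm]
      exact congrArg Sum.inr hpair
  have hdown : ∀ l (x y : KObj m n), Kc G H (l+1) x = Kc G H (l+1) y → Kc G H l x = Kc G H l y := by
    intro l x y hxy
    rw [← projC_Kc G H l x, ← projC_Kc G H l y, hxy]
  have hstep : ∀ d (x y : KObj m n), Kc G H (L+d) x = Kc G H (L+d) y →
      Kc G H (L+d+1) x = Kc G H (L+d+1) y := by
    intro d
    induction d with
    | zero => exact hE1
    | succ k ih => exact hup (L+k) ih
  have hupreach : ∀ d (x y : KObj m n), Kc G H L x = Kc G H L y →
      Kc G H (L+d) x = Kc G H (L+d) y := by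
    intro d
    induction d with
    | zero => exact fun x y hh => hh
    | succ k ih => exact fun x y hh => hstep k x y (ih x y hh)
  have hdownall : ∀ d (l : ℕ) (x y : KObj m n), Kc G H (l+d) x = Kc G H (l+d) y →
      Kc G H l x = Kc G H l y := by
    intro d
    induction d with
    | zero => exact fun l x y hh => hh
    | succ k ih => exact fun l x y hh => ih l x y (hdown (l+k) x y hh)
  refine ⟨L, fun x y hxy l => ?_⟩
  rcases le_total l L with hle | hle
  · have heq : l + (L - l) = L := by omega
    apply hdownall (L - l) l x y
    rw [heq]
    exact hxy
  · have heq : L + (l - L) = l := by omega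
    have hres := hupreach (l - L) x y hxy
    rw [heq] at hres
    exact hres

end FWLStabilize

section FWLTransfer

private lemma fwlW0 {m n : ℕ} (G H : MILP m n) (L : ℕ) (j : Fin n) (b1 b2 : Bool)
    (j1 j2 : Fin n)
    (hE : (fwl (sel G H b1) L).2 j1 j = (fwl (sel G H b2) L).2 j2 j) :
    (fwl (sel G H b1) 0).2 j1 j = (fwl (sel G H b2) 0).2 j2 j := by
  rw [← pWW_fwl (sel G H b1) L, ← pWW_fwl (sel G H b2) L, hE]

private lemma fwlV0 {m n : ℕ} (G H : MILP m n) (L : ℕ) (j : Fin n) (b1 b2 : Bool)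
    (i i' : Fin m)
    (hE : (fwl (sel G H b1) L).1 i j = (fwl (sel G H b2) L).1 i' j) :
    (fwl (sel G H b1) 0).1 i j = (fwl (sel G H b2) 0).1 i' j := by
  rw [← pVW_fwl (sel G H b1) L, ← pVW_fwl (sel G H b2) L, hE]

private lemma fwlF1 {m n : ℕ} (G H : MILP m n) (L : ℕ)
    (hL : ∀ x y : KObj m n, Kc G H L x = Kc G H L y → ∀ l, Kc G H l x = Kc G H l y)
    (j : Fin n) (b1 b2 : Bool) (i i' : Fin m)
    (hE : (fwl (sel G H b1) L).1 i j = (fwl (sel G H b2) L).1 i' j) :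
    Finset.univ.val.map (fun j1 => ((fwl (sel G H b1) L).2 j1 j, MILP.A (sel G H b1) i j1))
      = Finset.univ.val.map (fun j1 => ((fwl (sel G H b2) L).2 j1 j, MILP.A (sel G H b2) i' j1)) := by
  have h1 : Kc G H (L+1) (Sum.inl (i,j), b1) = Kc G H (L+1) (Sum.inl (i',j), b2) :=
    hL (Sum.inl (i,j), b1) (Sum.inl (i',j), b2) (congrArg Sum.inl hE) (L+1)
  have h2 : (fwl (sel G H b1) (L+1)).1 i j = (fwl (sel G H b2) (L+1)).1 i' j :=
    Sum.inl_injective h1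
  have h3 : Finset.univ.val.map
        (fun j1 => ((fwl (sel G H b1) L).2 j1 j, (fwl (sel G H b1) L).1 i j1))
      = Finset.univ.val.map
        (fun j1 => ((fwl (sel G H b2) L).2 j1 j, (fwl (sel G H b2) L).1 i' j1)) :=
    congrArg Prod.snd h2
  have h4 := congrArg
    (Multiset.map (fun p : WWColor L × VWColor L => (p.1, (pVW L p.2).2.2))) h3
  rw [Multiset.map_map, Multiset.map_map] at h4
  have hfix : ∀ (b : Bool) (i0 : Fin m),
      ((fun p : WWColor L × VWColor L => (p.1, (pVW L p.2).2.2)) ∘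
        (fun j1 => ((fwl (sel G H b) L).2 j1 j, (fwl (sel G H b) L).1 i0 j1)))
      = fun j1 => ((fwl (sel G H b) L).2 j1 j, MILP.A (sel G H b) i0 j1) := by
    intro b i0
    funext j1
    show ((fwl (sel G H b) L).2 j1 j, (pVW L ((fwl (sel G H b) L).1 i0 j1)).2.2) = _
    rw [pVW_fwl]
    rfl
  rw [hfix, hfix] at h4
  exact h4

private lemma fwlF2 {m n : ℕ} (G H : MILP m n) (L : ℕ)
    (hL : ∀ x y : KObj m n, Kc G H L x = Kc G H L y → ∀ l, Kc G H l x = Kc G H l y)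
    (j : Fin n) (b1 b2 : Bool) (j1 j2 : Fin n)
    (hE : (fwl (sel G H b1) L).2 j1 j = (fwl (sel G H b2) L).2 j2 j) :
    Finset.univ.val.map (fun i => ((fwl (sel G H b1) L).1 i j, MILP.A (sel G H b1) i j1))
      = Finset.univ.val.map (fun i => ((fwl (sel G H b2) L).1 i j, MILP.A (sel G H b2) i j2)) := by
  have h1 : Kc G H (L+1) (Sum.inr (j1,j), b1) = Kc G H (L+1) (Sum.inr (j2,j), b2) :=
    hL (Sum.inr (j1,j), b1) (Sum.inr (j2,j), b2) (congrArg Sum.inr hE) (L+1)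
  have h2 : (fwl (sel G H b1) (L+1)).2 j1 j = (fwl (sel G H b2) (L+1)).2 j2 j :=
    Sum.inr_injective h1
  have h3 : Finset.univ.val.map
        (fun i => ((fwl (sel G H b1) L).1 i j, (fwl (sel G H b1) L).1 i j1))
      = Finset.univ.val.map
        (fun i => ((fwl (sel G H b2) L).1 i j, (fwl (sel G H b2) L).1 i j2)) :=
    congrArg Prod.snd h2
  have h4 := congrArg
    (Multiset.map (fun p : VWColor L × VWColor L => (p.1, (pVW L p.2).2.2))) h3
  rw [Multiset.map_map, Multiset.map_map] at h4
  have hfix : ∀ (b : Bool) (j0 : Fin n),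
      ((fun p : VWColor L × VWColor L => (p.1, (pVW L p.2).2.2)) ∘
        (fun i => ((fwl (sel G H b) L).1 i j, (fwl (sel G H b) L).1 i j0)))
      = fun i => ((fwl (sel G H b) L).1 i j, MILP.A (sel G H b) i j0) := by
    intro b j0
    funext i
    show ((fwl (sel G H b) L).1 i j, (pVW L ((fwl (sel G H b) L).1 i j0)).2.2) = _
    rw [pVW_fwl]
    rfl
  rw [hfix, hfix] at h4
  exact h4

end FWLTransfer

section FWLMain

private lemma lpValMod_le_aux {m n : ℕ} (G H : MILP m n) (hGH : FWLEquivW G H)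
    (j : Fin n) (lo' : ExtLo) (hi' : ExtHi) :
    lpValMod G j lo' hi' ≤ lpValMod H j lo' hi' := by
  classical
  obtain ⟨L, hL⟩ := exists_stable G H
  have hρ : Finset.univ.val.map (fun i => (fwl G L).1 i j)
      = Finset.univ.val.map (fun i => (fwl H L).1 i j) := (hGH L j).1
  have hσ : Finset.univ.val.map (fun j1 => (fwl G L).2 j1 j)
      = Finset.univ.val.map (fun j1 => (fwl H L).2 j1 j) := (hGH L j).2
  unfold lpValMod lpVal
  refine le_iInf fun x => le_iInf fun hx => ?_
  obtain ⟨hxc, hxb, hxlo, hxhi⟩ := hx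
  set cls : WWColor L → Finset (Fin n) :=
    fun s => Finset.univ.filter (fun j2 => (fwl H L).2 j2 j = s) with hcls
  set avg : WWColor L → ℝ := fun s => (∑ j2 ∈ cls s, x j2) / ((cls s).card : ℝ) with havg
  set y : Fin n → ℝ := fun j1 => avg ((fwl G L).2 j1 j) with hy
  have hclsmem : ∀ (s : WWColor L) (j2 : Fin n), j2 ∈ cls s ↔ (fwl H L).2 j2 j = s := by
    intro s j2
    rw [hcls]
    simp
  have hclsne : ∀ j1 : Fin n, (cls ((fwl G L).2 j1 j)).Nonempty := by
    intro j1
    have hmem : (fwl G L).2 j1 j ∈ Finset.univ.val.map (fun j2 => (fwl H L).2 j2 j) := by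
      rw [← hσ]
      exact Multiset.mem_map_of_mem _ (Finset.mem_univ_val j1)
    obtain ⟨j2, _, hj2⟩ := Multiset.mem_map.mp hmem
    exact ⟨j2, (hclsmem _ j2).2 hj2⟩
  have hflag : ∀ (j1 j2 : Fin n), (fwl H L).2 j2 j = (fwl G L).2 j1 j → ((j2 = j) ↔ (j1 = j)) := by
    intro j1 j2 hE
    have h0 : (fwl H 0).2 j2 j = (fwl G 0).2 j1 j := fwlW0 G H L j false true j2 j1 hE
    have hd : decide (j2 = j) = decide (j1 = j) := congrArg (fun p => p.2.2) h0
    exact decide_eq_decide.mp hd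
  have hwfacts : ∀ (j1 j2 : Fin n), (fwl H L).2 j2 j = (fwl G L).2 j1 j →
      MILP.c H j2 = MILP.c G j1 ∧ MILP.lo H j2 = MILP.lo G j1 ∧ MILP.hi H j2 = MILP.hi G j1 := by
    intro j1 j2 hE
    have h0 : (fwl H 0).2 j2 j = (fwl G 0).2 j1 j := fwlW0 G H L j false true j2 j1 hE
    exact ⟨congrArg (fun p => p.1.1) h0, congrArg (fun p => p.1.2.1) h0,
      congrArg (fun p => p.1.2.2.1) h0⟩
  have hclsj : cls ((fwl G L).2 j j) = {j} := by
    have hjmem : (fwl H L).2 j j = (fwl G L).2 j j := by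
      obtain ⟨j2, hj2⟩ := hclsne j
      have hE := (hclsmem _ j2).1 hj2
      have hj2j : j2 = j := (hflag j j2 hE).mpr rfl
      subst hj2j
      exact hE
    ext j2
    simp only [Finset.mem_singleton, hclsmem]
    constructor
    · intro hE
      exact (hflag j j2 hE).mpr rfl
    · rintro rfl
      exact hjmem
  have hyj : y j = x j := by
    have hv : y j = (∑ j2 ∈ cls ((fwl G L).2 j j), x j2) / ((cls ((fwl G L).2 j j)).card : ℝ) := rfl
    rw [hv, hclsj]
    simp
  set cOf : WWColor L → ℝ := fun s => (pWW L s).1.1 with hcOf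
  have hcOfG : ∀ j1, cOf ((fwl G L).2 j1 j) = MILP.c G j1 := by
    intro j1
    show (pWW L ((fwl G L).2 j1 j)).1.1 = _
    rw [pWW_fwl]
    rfl
  have hcOfH : ∀ j2, cOf ((fwl H L).2 j2 j) = MILP.c H j2 := by
    intro j2
    show (pWW L ((fwl H L).2 j2 j)).1.1 = _
    rw [pWW_fwl]
    rfl
  -- bounds feasibility
  have hbnd : ∀ j1 : Fin n, j1 ≠ j → loSat (MILP.lo G j1) (y j1) ∧ hiSat (MILP.hi G j1) (y j1) := by
    intro j1 hj1
    have hne := hclsne j1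
    have hpos : (0:ℝ) < ((cls ((fwl G L).2 j1 j)).card : ℝ) := by
      exact_mod_cast Finset.card_pos.2 hne
    have hxj2 : ∀ j2 ∈ cls ((fwl G L).2 j1 j),
        loSat (MILP.lo G j1) (x j2) ∧ hiSat (MILP.hi G j1) (x j2) := by
      intro j2 hj2
      have hE := (hclsmem _ j2).1 hj2
      have hj2ne : j2 ≠ j := fun hh => hj1 ((hflag j1 j2 hE).1 hh)
      obtain ⟨_, hlo, hhi⟩ := hwfacts j1 j2 hE
      have hb := hxb j2 hj2ne
      rw [hlo, hhi] at hb
      exact hb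
    have hyval : y j1 = (∑ j2 ∈ cls ((fwl G L).2 j1 j), x j2) / ((cls ((fwl G L).2 j1 j)).card : ℝ) := rfl
    constructor
    · cases hcase : MILP.lo G j1 with
      | inl a =>
        show a ≤ y j1
        rw [hyval, le_div_iff₀ hpos]
        have hall : ∀ j2 ∈ cls ((fwl G L).2 j1 j), a ≤ x j2 := by
          intro j2 hj2
          have hb := (hxj2 j2 hj2).1
          rw [hcase] at hb
          exact hb
        calc a * ((cls ((fwl G L).2 j1 j)).card : ℝ)
            = (cls ((fwl G L).2 j1 j)).card • a := by rw [nsmul_eq_mul, mul_comm]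
          _ ≤ ∑ j2 ∈ cls ((fwl G L).2 j1 j), x j2 := Finset.card_nsmul_le_sum _ _ _ hall
      | inr u =>
        show True
        trivial
    · cases hcase : MILP.hi G j1 with
      | inl a =>
        show y j1 ≤ a
        rw [hyval, div_le_iff₀ hpos]
        have hall : ∀ j2 ∈ cls ((fwl G L).2 j1 j), x j2 ≤ a := by
          intro j2 hj2
          have hb := (hxj2 j2 hj2).2
          rw [hcase] at hb
          exact hb
        calc ∑ j2 ∈ cls ((fwl G L).2 j1 j), x j2
            ≤ (cls ((fwl G L).2 j1 j)).card • a := Finset.sum_le_card_nsmul _ _ _ hall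
          _ = a * ((cls ((fwl G L).2 j1 j)).card : ℝ) := by rw [nsmul_eq_mul, mul_comm]
      | inr u =>
        show True
        trivial
  -- constraints feasibility
  have hcons : consSat G y := by
    intro i
    set P : Finset (Fin m) := Finset.univ.filter (fun i' => (fwl H L).1 i' j = (fwl G L).1 i j) with hP
    have hPne : P.Nonempty := by
      have hmem : (fwl G L).1 i j ∈ Finset.univ.val.map (fun i' => (fwl H L).1 i' j) := by
        rw [← hρ]
        exact Multiset.mem_map_of_mem _ (Finset.mem_univ_val i)
      obtain ⟨i', _, hi'⟩ := Multiset.mem_map.mp hmem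
      exact ⟨i', Finset.mem_filter.2 ⟨Finset.mem_univ _, hi'⟩⟩
    have hmemP : ∀ i' ∈ P, (fwl H L).1 i' j = (fwl G L).1 i j := by
      intro i' hi'
      exact (Finset.mem_filter.1 hi').2
    have hv0 : ∀ i' ∈ P, MILP.b H i' = MILP.b G i ∧ MILP.sense H i' = MILP.sense G i := by
      intro i' hi'
      have h0 : (fwl H 0).1 i' j = (fwl G 0).1 i j := fwlV0 G H L j false true i' i (hmemP i' hi')
      exact ⟨congrArg (fun p => p.1.1) h0, congrArg (fun p => p.1.2) h0⟩
    have step1 : ∀ i' ∈ P, ∑ j1, MILP.A G i j1 * y j1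
        = ∑ j1, MILP.A H i' j1 * avg ((fwl H L).2 j1 j) := by
      intro i' hi'
      have hmeq := fwlF1 G H L hL j true false i i' (hmemP i' hi').symm
      exact sum_comp_of_map_eq hmeq (fun p => p.2 * avg p.1)
    have hTconst : ∀ j1 j2 : Fin n, (fwl H L).2 j1 j = (fwl H L).2 j2 j →
        ∑ i' ∈ P, MILP.A H i' j1 = ∑ i' ∈ P, MILP.A H i' j2 := by
      intro j1 j2 hE
      have hmeq := fwlF2 G H L hL j false false j1 j2 hE
      have hsum := sum_comp_of_map_eq hmeq
        (fun p : VWColor L × ℝ => if p.1 = (fwl G L).1 i j then p.2 else 0)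
      rw [hP, Finset.sum_filter, Finset.sum_filter]
      exact hsum
    have step2 : ∑ i' ∈ P, ∑ j1, MILP.A H i' j1 * avg ((fwl H L).2 j1 j)
        = ∑ i' ∈ P, ∑ j1, MILP.A H i' j1 * x j1 := by
      have hfac : ∀ (c : Fin n → ℝ), (∑ j1, ∑ i' ∈ P, MILP.A H i' j1 * c j1)
          = ∑ j1, (∑ i' ∈ P, MILP.A H i' j1) * c j1 :=
        fun c => Finset.sum_congr rfl
          (fun j1 _ => (Finset.sum_mul P (fun i' => MILP.A H i' j1) (c j1)).symm)
      rw [show (∑ i' ∈ P, ∑ j1, MILP.A H i' j1 * avg ((fwl H L).2 j1 j))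
            = ∑ j1, (∑ i' ∈ P, MILP.A H i' j1) * avg ((fwl H L).2 j1 j) from
          Finset.sum_comm.trans (hfac (fun j1 => avg ((fwl H L).2 j1 j))),
        show (∑ i' ∈ P, ∑ j1, MILP.A H i' j1 * x j1)
            = ∑ j1, (∑ i' ∈ P, MILP.A H i' j1) * x j1 from
          Finset.sum_comm.trans (hfac x)]
      have hinner : ∀ s ∈ Finset.univ.image (fun j1 => (fwl H L).2 j1 j),
          (∑ j1 ∈ Finset.univ.filter (fun j1 => (fwl H L).2 j1 j = s),
            (∑ i' ∈ P, MILP.A H i' j1) * avg ((fwl H L).2 j1 j))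
          = ∑ j1 ∈ Finset.univ.filter (fun j1 => (fwl H L).2 j1 j = s),
            (∑ i' ∈ P, MILP.A H i' j1) * x j1 := by
        intro s hs
        obtain ⟨j0, _, rfl⟩ := Finset.mem_image.1 hs
        have hj0mem : j0 ∈ Finset.univ.filter (fun j1 => (fwl H L).2 j1 j = (fwl H L).2 j0 j) :=
          Finset.mem_filter.2 ⟨Finset.mem_univ _, rfl⟩
        have hposc : (0:ℝ) < ((Finset.univ.filter
            (fun j1 => (fwl H L).2 j1 j = (fwl H L).2 j0 j)).card : ℝ) := by
          exact_mod_cast Finset.card_pos.2 ⟨j0, hj0mem⟩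
        have hne0 : ((Finset.univ.filter
            (fun j1 => (fwl H L).2 j1 j = (fwl H L).2 j0 j)).card : ℝ) ≠ 0 := ne_of_gt hposc
        have hmf : ∀ j1 ∈ Finset.univ.filter (fun j1' => (fwl H L).2 j1' j = (fwl H L).2 j0 j),
            (fwl H L).2 j1 j = (fwl H L).2 j0 j := by
          intro j1 hj1
          exact (Finset.mem_filter.1 hj1).2
        have havgval : avg ((fwl H L).2 j0 j)
            = (∑ j2 ∈ Finset.univ.filter (fun j1 => (fwl H L).2 j1 j = (fwl H L).2 j0 j), x j2)
              / ((Finset.univ.filter (fun j1 => (fwl H L).2 j1 j = (fwl H L).2 j0 j)).card : ℝ) := rfl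
        calc (∑ j1 ∈ Finset.univ.filter (fun j1 => (fwl H L).2 j1 j = (fwl H L).2 j0 j),
              (∑ i' ∈ P, MILP.A H i' j1) * avg ((fwl H L).2 j1 j))
            = ∑ j1 ∈ Finset.univ.filter (fun j1 => (fwl H L).2 j1 j = (fwl H L).2 j0 j),
              (∑ i' ∈ P, MILP.A H i' j0) * avg ((fwl H L).2 j0 j) := by
              refine Finset.sum_congr rfl fun j1 hj1 => ?_
              rw [hTconst j1 j0 (hmf j1 hj1), hmf j1 hj1]
          _ = ((Finset.univ.filter (fun j1 => (fwl H L).2 j1 j = (fwl H L).2 j0 j)).card : ℝ)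
              * ((∑ i' ∈ P, MILP.A H i' j0) * avg ((fwl H L).2 j0 j)) := by
              rw [Finset.sum_const, nsmul_eq_mul]
          _ = (∑ i' ∈ P, MILP.A H i' j0)
              * ∑ j2 ∈ Finset.univ.filter (fun j1 => (fwl H L).2 j1 j = (fwl H L).2 j0 j), x j2 := by
              rw [havgval]
              field_simp
              try ring
          _ = ∑ j1 ∈ Finset.univ.filter (fun j1 => (fwl H L).2 j1 j = (fwl H L).2 j0 j),
              (∑ i' ∈ P, MILP.A H i' j0) * x j1 := by rw [Finset.mul_sum]
          _ = ∑ j1 ∈ Finset.univ.filter (fun j1 => (fwl H L).2 j1 j = (fwl H L).2 j0 j),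
              (∑ i' ∈ P, MILP.A H i' j1) * x j1 := by
              refine Finset.sum_congr rfl fun j1 hj1 => ?_
              rw [hTconst j1 j0 (hmf j1 hj1)]
      calc ∑ j1, (∑ i' ∈ P, MILP.A H i' j1) * avg ((fwl H L).2 j1 j)
          = ∑ s ∈ Finset.univ.image (fun j1 => (fwl H L).2 j1 j),
              ∑ j1 ∈ Finset.univ.filter (fun j1 => (fwl H L).2 j1 j = s),
                (∑ i' ∈ P, MILP.A H i' j1) * avg ((fwl H L).2 j1 j) :=
            (Finset.sum_fiberwise_of_maps_to
              (fun j1 _ => Finset.mem_image_of_mem _ (Finset.mem_univ j1)) _).symm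
        _ = ∑ s ∈ Finset.univ.image (fun j1 => (fwl H L).2 j1 j),
              ∑ j1 ∈ Finset.univ.filter (fun j1 => (fwl H L).2 j1 j = s),
                (∑ i' ∈ P, MILP.A H i' j1) * x j1 := Finset.sum_congr rfl hinner
        _ = ∑ j1, (∑ i' ∈ P, MILP.A H i' j1) * x j1 :=
            Finset.sum_fiberwise_of_maps_to
              (fun j1 _ => Finset.mem_image_of_mem _ (Finset.mem_univ j1)) _
    have key : (P.card : ℝ) * (∑ j1, MILP.A G i j1 * y j1)
        = ∑ i' ∈ P, ∑ j1, MILP.A H i' j1 * x j1 := by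
      calc (P.card : ℝ) * (∑ j1, MILP.A G i j1 * y j1)
          = ∑ _i' ∈ P, (∑ j1, MILP.A G i j1 * y j1) := by rw [Finset.sum_const, nsmul_eq_mul]
        _ = ∑ i' ∈ P, ∑ j1, MILP.A H i' j1 * avg ((fwl H L).2 j1 j) := Finset.sum_congr rfl step1
        _ = ∑ i' ∈ P, ∑ j1, MILP.A H i' j1 * x j1 := step2
    refine senseRel_avg (MILP.sense G i) (MILP.b G i) _ P hPne
      (fun i' => ∑ j1, MILP.A H i' j1 * x j1) ?_ key
    intro i' hi'
    have hc := hxc i'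
    obtain ⟨hbE, hsE⟩ := hv0 i' hi'
    rw [hbE, hsE] at hc
    exact hc
  -- objective value
  have hobj : ∑ j1, MILP.c G j1 * y j1 = ∑ j1, MILP.c H j1 * x j1 := by
    have e1 : ∑ j1, MILP.c G j1 * y j1
        = ∑ j1, cOf ((fwl G L).2 j1 j) * avg ((fwl G L).2 j1 j) := by
      refine Finset.sum_congr rfl fun j1 _ => ?_
      rw [hcOfG j1]
    have e2 : ∑ j1, cOf ((fwl G L).2 j1 j) * avg ((fwl G L).2 j1 j)
        = ∑ j1, cOf ((fwl H L).2 j1 j) * avg ((fwl H L).2 j1 j) :=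
      sum_comp_of_map_eq hσ (fun s => cOf s * avg s)
    have hinner : ∀ s ∈ Finset.univ.image (fun j1 => (fwl H L).2 j1 j),
        (∑ j1 ∈ Finset.univ.filter (fun j1 => (fwl H L).2 j1 j = s),
          cOf ((fwl H L).2 j1 j) * avg ((fwl H L).2 j1 j))
        = ∑ j1 ∈ Finset.univ.filter (fun j1 => (fwl H L).2 j1 j = s), MILP.c H j1 * x j1 := by
      intro s hs
      obtain ⟨j0, _, rfl⟩ := Finset.mem_image.1 hs
      have hj0mem : j0 ∈ Finset.univ.filter (fun j1 => (fwl H L).2 j1 j = (fwl H L).2 j0 j) :=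
        Finset.mem_filter.2 ⟨Finset.mem_univ _, rfl⟩
      have hposc : (0:ℝ) < ((Finset.univ.filter
          (fun j1 => (fwl H L).2 j1 j = (fwl H L).2 j0 j)).card : ℝ) := by
        exact_mod_cast Finset.card_pos.2 ⟨j0, hj0mem⟩
      have hne0 : ((Finset.univ.filter
          (fun j1 => (fwl H L).2 j1 j = (fwl H L).2 j0 j)).card : ℝ) ≠ 0 := ne_of_gt hposc
      have hmf : ∀ j1 ∈ Finset.univ.filter (fun j1' => (fwl H L).2 j1' j = (fwl H L).2 j0 j),
          (fwl H L).2 j1 j = (fwl H L).2 j0 j := by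
        intro j1 hj1
        exact (Finset.mem_filter.1 hj1).2
      have havgval : avg ((fwl H L).2 j0 j)
          = (∑ j2 ∈ Finset.univ.filter (fun j1 => (fwl H L).2 j1 j = (fwl H L).2 j0 j), x j2)
            / ((Finset.univ.filter (fun j1 => (fwl H L).2 j1 j = (fwl H L).2 j0 j)).card : ℝ) := rfl
      calc (∑ j1 ∈ Finset.univ.filter (fun j1 => (fwl H L).2 j1 j = (fwl H L).2 j0 j),
            cOf ((fwl H L).2 j1 j) * avg ((fwl H L).2 j1 j))
          = ∑ j1 ∈ Finset.univ.filter (fun j1 => (fwl H L).2 j1 j = (fwl H L).2 j0 j),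
            cOf ((fwl H L).2 j0 j) * avg ((fwl H L).2 j0 j) := by
            refine Finset.sum_congr rfl fun j1 hj1 => ?_
            rw [hmf j1 hj1]
        _ = ((Finset.univ.filter (fun j1 => (fwl H L).2 j1 j = (fwl H L).2 j0 j)).card : ℝ)
            * (cOf ((fwl H L).2 j0 j) * avg ((fwl H L).2 j0 j)) := by
            rw [Finset.sum_const, nsmul_eq_mul]
        _ = cOf ((fwl H L).2 j0 j)
            * ∑ j2 ∈ Finset.univ.filter (fun j1 => (fwl H L).2 j1 j = (fwl H L).2 j0 j), x j2 := by
            rw [havgval]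
            field_simp
            try ring
        _ = ∑ j1 ∈ Finset.univ.filter (fun j1 => (fwl H L).2 j1 j = (fwl H L).2 j0 j),
            cOf ((fwl H L).2 j0 j) * x j1 := by rw [Finset.mul_sum]
        _ = ∑ j1 ∈ Finset.univ.filter (fun j1 => (fwl H L).2 j1 j = (fwl H L).2 j0 j),
            MILP.c H j1 * x j1 := by
            refine Finset.sum_congr rfl fun j1 hj1 => ?_
            rw [← hcOfH j1, hmf j1 hj1]
    have e3 : ∑ j1, cOf ((fwl H L).2 j1 j) * avg ((fwl H L).2 j1 j)
        = ∑ j1, MILP.c H j1 * x j1 := by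
      calc ∑ j1, cOf ((fwl H L).2 j1 j) * avg ((fwl H L).2 j1 j)
          = ∑ s ∈ Finset.univ.image (fun j1 => (fwl H L).2 j1 j),
              ∑ j1 ∈ Finset.univ.filter (fun j1 => (fwl H L).2 j1 j = s),
                cOf ((fwl H L).2 j1 j) * avg ((fwl H L).2 j1 j) :=
            (Finset.sum_fiberwise_of_maps_to
              (fun j1 _ => Finset.mem_image_of_mem _ (Finset.mem_univ j1)) _).symm
        _ = ∑ s ∈ Finset.univ.image (fun j1 => (fwl H L).2 j1 j),
              ∑ j1 ∈ Finset.univ.filter (fun j1 => (fwl H L).2 j1 j = s),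
                MILP.c H j1 * x j1 := Finset.sum_congr rfl hinner
        _ = ∑ j1, MILP.c H j1 * x j1 :=
            Finset.sum_fiberwise_of_maps_to
              (fun j1 _ => Finset.mem_image_of_mem _ (Finset.mem_univ j1)) _
    rw [e1, e2, e3]
  have hyfeas : y ∈ feasSetMod G j lo' hi' := by
    refine ⟨hcons, fun j' hj' => hbnd j' hj', ?_, ?_⟩
    · rw [hyj]
      exact hxlo
    · rw [hyj]
      exact hxhi
  refine le_trans (iInf₂_le y hyfeas) ?_
  exact le_of_eq (congrArg (fun r : ℝ => (r : EReal)) hobj)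

end FWLMain


/-- If `G ∼₂^W Ḡ`, then for every variable `j` and modified bounds
`l̂, û`, the LPs `LP(G,j,l̂,û)` and `LP(Ḡ,j,l̂,û)` have the same optimal value
(in `ℝ ∪ {±∞}`). -/
theorem lpValMod_eq_of_fwlEquivW
    {m n : ℕ} (G H : MILP m n) (h : FWLEquivW G H) :
    ∀ (j : Fin n) (lo' : ExtLo) (hi' : ExtHi),
      lpValMod G j lo' hi' = lpValMod H j lo' hi' := by
  intro j lo' hi'
  have h' : FWLEquivW H G := fun l j' => ⟨(h l j').1.symm, (h l j').2.symm⟩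
  exact le_antisymm (lpValMod_le_aux G H h j lo' hi') (lpValMod_le_aux H G h' j lo' hi')
end
end
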